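/- The alternating sum Σ_{k=0}^{⌊n - i/2⌋} (-1)^k C(n, k + ⌊i/2⌋) equals C(n-1, ⌈i/2⌉ - 1) for 1 ≤ i ≤ 2n; consequently Σ_{i=1}^{2n} y^i C(n,⌊i/2⌋) C(n-1,⌈i/2⌉-1) = Σ_{k=0}^n (-1)^k Σ_{i=0}^{2n-2k} y^i C(n, k+⌈i/2⌉) C(n, ⌊i/2⌋) as polynomials in y. -/

import Mathlib

open Finset Polynomial

lemma altsum {R : Type*} [CommRing R] (n m : ℕ) (hn : 1 ≤ n) (hm : 1 ≤ m) :
    ∑ k ∈ range (n - m + 1), (-1 : R) ^ k * (n.choose (k + m) : R)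
      = ((n - 1).choose (m - 1) : R) := by
  obtain ⟨n', rfl⟩ := Nat.exists_eq_succ_of_ne_zero (by omega : n ≠ 0)
  obtain ⟨m', rfl⟩ := Nat.exists_eq_succ_of_ne_zero (by omega : m ≠ 0)
  set f : ℕ → R := fun k => (-1 : R) ^ k * (n'.choose (k + m') : R) with hf
  have key : ∀ k, (-1 : R) ^ k * ((n' + 1).choose (k + (m' + 1)) : R) = f k - f (k + 1) := by
    intro k
    have h1 : (n' + 1).choose (k + (m' + 1)) = n'.choose (k + m') + n'.choose (k + m' + 1) := by
      have : k + (m' + 1) = (k + m') + 1 := by omega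
      rw [this, Nat.choose_succ_succ]
    rw [h1, hf]
    push_cast
    ring_nf
  have h2 : n' + 1 - (m' + 1) + 1 = n' - m' + 1 := by omega
  rw [h2]
  calc ∑ k ∈ range (n' - m' + 1), (-1 : R) ^ k * ((n' + 1).choose (k + (m' + 1)) : R)
      = ∑ k ∈ range (n' - m' + 1), (f k - f (k + 1)) := by
        exact Finset.sum_congr rfl fun k _ => key k
    _ = f 0 - f (n' - m' + 1) := Finset.sum_range_sub' f (n' - m' + 1)
    _ = (n'.choose m' : R) := by
        have hz : n'.choose (n' - m' + 1 + m') = 0 :=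
          Nat.choose_eq_zero_of_lt (by omega)
        rw [hf]
        simp [hz]

lemma alt0 {R : Type*} [CommRing R] (n : ℕ) (hn : 1 ≤ n) :
    ∑ k ∈ range (n + 1), (-1 : R) ^ k * (n.choose k : R) = 0 := by
  have h := Int.alternating_sum_range_choose (n := n)
  rw [if_neg (by omega)] at h
  calc ∑ k ∈ range (n + 1), (-1 : R) ^ k * (n.choose k : R)
      = ((∑ i ∈ range (n + 1), (-1 : ℤ) ^ i * n.choose i : ℤ) : R) := by push_cast; rfl
    _ = 0 := by rw [h]; simp

/-- For `n ≥ 1` and `1 ≤ i ≤ 2n`, the alternating sum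
`Σ_{k=0}^{⌊n-i/2⌋} (-1)^k C(n, k + ⌈i/2⌉) = C(n-1, ⌈i/2⌉ - 1)` (an instance of the standard
fact `Σ_k (-1)^k C(n, k+m) = C(n-1, m-1)`); consequently, as polynomials in `y`,
`Σ_{i=1}^{2n} y^i C(n,⌊i/2⌋) C(n-1,⌈i/2⌉-1)
  = Σ_{k=0}^{n} (-1)^k Σ_{i=0}^{2n-2k} y^i C(n, k+⌈i/2⌉) C(n, ⌊i/2⌋)`. -/
theorem alternating_binomial_sum (n : ℕ) (hn : 1 ≤ n) :
    (∀ i : ℕ, 1 ≤ i → i ≤ 2 * n →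
      ∑ k ∈ Finset.range (n - (i + 1) / 2 + 1),
          (-1 : ℤ) ^ k * (n.choose (k + (i + 1) / 2))
        = ((n - 1).choose ((i + 1) / 2 - 1) : ℤ)) ∧
    (∑ i ∈ Finset.Icc 1 (2 * n),
        ((n.choose (i / 2) * (n - 1).choose ((i + 1) / 2 - 1) : ℕ) : Polynomial ℤ) *
          Polynomial.X ^ i
      = ∑ k ∈ Finset.range (n + 1), (-1 : Polynomial ℤ) ^ k *
          ∑ i ∈ Finset.range (2 * n - 2 * k + 1),
            ((n.choose (k + (i + 1) / 2) * n.choose (i / 2) : ℕ) : Polynomial ℤ) *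
              Polynomial.X ^ i) := by
  constructor
  · intro i _ _
    exact altsum n ((i + 1) / 2) hn (by omega)
  · -- rewrite RHS by pushing (-1)^k inside and swapping the order of summation
    have hmem : ∀ (k i : ℕ),
        (k ∈ range (n + 1) ∧ i ∈ range (2 * n - 2 * k + 1)) ↔
        (k ∈ range (n - (i + 1) / 2 + 1) ∧ i ∈ range (2 * n + 1)) := by
      intro k i
      simp only [mem_range]
      omega
    have step1 : ∑ k ∈ Finset.range (n + 1), (-1 : Polynomial ℤ) ^ k *
          ∑ i ∈ Finset.range (2 * n - 2 * k + 1),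
            ((n.choose (k + (i + 1) / 2) * n.choose (i / 2) : ℕ) : Polynomial ℤ) *
              Polynomial.X ^ i
        = ∑ i ∈ range (2 * n + 1),
            (∑ k ∈ range (n - (i + 1) / 2 + 1),
                (-1 : Polynomial ℤ) ^ k * (n.choose (k + (i + 1) / 2) : Polynomial ℤ)) *
              ((n.choose (i / 2) : Polynomial ℤ) * Polynomial.X ^ i) := by
      simp_rw [Finset.mul_sum]
      rw [Finset.sum_comm' hmem]
      refine Finset.sum_congr rfl fun i _ => ?_
      rw [Finset.sum_mul]
      refine Finset.sum_congr rfl fun k _ => ?_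
      push_cast
      ring
    rw [step1]
    have hsplit : range (2 * n + 1) = insert 0 (Finset.Icc 1 (2 * n)) := by
      ext x; simp; omega
    rw [hsplit, Finset.sum_insert (by simp)]
    have hzero : (∑ k ∈ range (n - (0 + 1) / 2 + 1),
        (-1 : Polynomial ℤ) ^ k * (n.choose (k + (0 + 1) / 2) : Polynomial ℤ)) *
          ((n.choose (0 / 2) : Polynomial ℤ) * Polynomial.X ^ 0) = 0 := by
      have : ∑ k ∈ range (n - (0 + 1) / 2 + 1),
          (-1 : Polynomial ℤ) ^ k * (n.choose (k + (0 + 1) / 2) : Polynomial ℤ) = 0 := by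
        simpa using alt0 (R := Polynomial ℤ) n hn
      rw [this, zero_mul]
    rw [hzero, zero_add]
    refine Finset.sum_congr rfl fun i hi => ?_
    rw [altsum n ((i + 1) / 2) hn (by simp at hi; omega)]
    push_cast
    ring
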